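/- Let m be a natural number and let H : EuclideanSpace ℝ (Fin m) × EuclideanSpace ℝ (Fin m) → ℝ be a differentiable function of (q,p). Write ∇_q H(q,p) for the gradient at q of the map q' ↦ H(q',p) and ∇_p H(q,p) for the gradient at p of the map p' ↦ H(q,p'). Let A be a symmetric m×m real matrix (acting on EuclideanSpace ℝ (Fin m) by matrix–vector multiplication) and b₁, b₂ ∈ EuclideanSpace ℝ (Fin m). Assume the conservation identity: for all (q,p), ⟪A p + b₁, ∇_p H(q,p)⟫ = ⟪A q + b₂, ∇_q H(q,p)⟫ (this says G(q,p) = ⟪q, A p⟫ + ⟪b₁, q⟫ + ⟪b₂, p⟫ is conserved along the Hamiltonian flow q̇ = ∇_p H, ṗ = −∇_q H). Suppose ε ∈ ℝ and the points q, p, p̄, q', p' satisfy the generalized leapfrog equations: p̄ = p − (ε/2) • ∇_q H(q, p̄), q' = q + (ε/2) • (∇_p H(q, p̄) + ∇_p H(q', p̄)), and p' = p̄ − (ε/2) • ∇_q H(q', p̄). Then ⟪q', A p'⟫ + ⟪b₁, q'⟫ + ⟪b₂, p'⟫ = ⟪q, A p⟫ + ⟪b₁, q⟫ + ⟪b₂,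 p⟫. -/

import Mathlib

open RealInnerProductSpace

/-- **Theorem 1 of the paper.** The generalized leapfrog integrator (solved exactly)
preserves conserved quantities of the form `G(q,p) = ⟪q, A p⟫ + ⟪b₁, q⟫ + ⟪b₂, p⟫`
with `A` symmetric. -/
theorem generalized_leapfrog_preserves_bilinear_invariants
    (m : ℕ)
    (H : EuclideanSpace ℝ (Fin m) × EuclideanSpace ℝ (Fin m) → ℝ)
    (hH : Differentiable ℝ H)
    (A : Matrix (Fin m) (Fin m) ℝ) (hA : A.IsSymm)
    (b₁ b₂ : EuclideanSpace ℝ (Fin m))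
    (Amap : EuclideanSpace ℝ (Fin m) → EuclideanSpace ℝ (Fin m))
    (hAmap : ∀ v, Amap v = (EuclideanSpace.equiv (Fin m) ℝ).symm
      (A.mulVec (EuclideanSpace.equiv (Fin m) ℝ v)))
    (gradq gradp :
      EuclideanSpace ℝ (Fin m) → EuclideanSpace ℝ (Fin m) → EuclideanSpace ℝ (Fin m))
    (hgradq : ∀ q p, gradq q p = gradient (fun q'' => H (q'', p)) q)
    (hgradp : ∀ q p, gradp q p = gradient (fun p'' => H (q, p'')) p)
    (hcons : ∀ q p, ⟪Amap p + b₁, gradp q p⟫ = ⟪Amap q + b₂, gradq q p⟫)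
    (ε : ℝ) (q p pbar q' p' : EuclideanSpace ℝ (Fin m))
    (h1 : pbar = p - (ε / 2) • gradq q pbar)
    (h2 : q' = q + (ε / 2) • (gradp q pbar + gradp q' pbar))
    (h3 : p' = pbar - (ε / 2) • gradq q' pbar) :
    ⟪q', Amap p'⟫ + ⟪b₁, q'⟫ + ⟪b₂, p'⟫ = ⟪q, Amap p⟫ + ⟪b₁, q⟫ + ⟪b₂, p⟫ := by
  set c : ℝ := ε / 2 with hc
  -- basic properties of Amap
  have hadd : ∀ x y, Amap (x + y) = Amap x + Amap y := by
    intro x y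
    ext i
    simp [hAmap, Matrix.mulVec_add]
  have hsub : ∀ x y, Amap (x - y) = Amap x - Amap y := by
    intro x y
    ext i
    simp [hAmap, Matrix.mulVec_sub]
  have hsmul : ∀ (r : ℝ) x, Amap (r • x) = r • Amap x := by
    intro r x
    ext i
    simp [hAmap, Matrix.mulVec_smul]
  have hSA : ∀ x y : EuclideanSpace ℝ (Fin m), ⟪Amap x, y⟫ = ⟪x, Amap y⟫ := by
    intro x y
    simp only [hAmap, PiLp.inner_apply, RCLike.inner_apply, conj_trivial]
    have : ∀ i, ((EuclideanSpace.equiv (Fin m) ℝ).symm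
        (A.mulVec (EuclideanSpace.equiv (Fin m) ℝ x))) i = A.mulVec x i := fun i => rfl
    conv_lhs => enter [2, i]; rw [mul_comm]
    conv_rhs => enter [2, i]; rw [mul_comm]
    calc (∑ i, ((EuclideanSpace.equiv (Fin m) ℝ).symm
          (A.mulVec (EuclideanSpace.equiv (Fin m) ℝ x))) i * y i)
        = ∑ i, ∑ j, A i j * x j * y i := by
          simp [Matrix.mulVec, dotProduct, Finset.sum_mul]
      _ = ∑ j, ∑ i, A i j * x j * y i := Finset.sum_comm
      _ = ∑ i, x i * ∑ j, A j i * y j := by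
          apply Finset.sum_congr rfl
          intro j _
          rw [Finset.mul_sum]
          apply Finset.sum_congr rfl
          intro i _
          ring
      _ = ∑ i, x i * ((EuclideanSpace.equiv (Fin m) ℝ).symm
          (A.mulVec (EuclideanSpace.equiv (Fin m) ℝ y))) i := by
          apply Finset.sum_congr rfl
          intro i _
          congr 1
          simp [Matrix.mulVec, dotProduct]
          apply Finset.sum_congr rfl
          intro j _
          rw [← hA.apply i j]
  -- abbreviations
  set g1 := gradq q pbar with hg1
  set g2 := gradq q' pbar with hg2
  set f1 := gradp q pbar with hf1
  set f2 := gradp q' pbar with hf2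
  have cons1 := hcons q pbar
  have cons2 := hcons q' pbar
  rw [← hg1, ← hf1] at cons1
  rw [← hg2, ← hf2] at cons2
  have hp : p = pbar + c • g1 := by rw [h1]; abel
  rw [hp, h2, h3, hp] at *
  rw [h2] at cons2
  simp only [hadd, hsub, hsmul, inner_add_left, inner_add_right, inner_sub_left,
    inner_sub_right, real_inner_smul_left, real_inner_smul_right] at cons1 cons2 ⊢
  linear_combination c * cons1 + c * cons2
    - c * (real_inner_comm f1 (Amap pbar))
    - c * (real_inner_comm f2 (Amap pbar))
    - c * (hSA q g1).symm
    - c * (hSA q g2).symm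
    - c * c * (hSA f1 g2).symm
    - c * c * (hSA f2 g2).symm
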